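/- Let Z ⊂ ℝ^{d₁} and Y ⊂ ℝ^{d₂} be compact sets. Let σ', σ be Borel probability measures on Z, let ρ', ρ be Borel probability measures on Y, and let γ̄ ∈ Π(σ', σ), γ ∈ Π(ρ', ρ), λ ∈ Π(σ, ρ). Let (γ̄_{z'})_{z'∈Z} be the disintegration of γ̄ with respect to its second marginal σ and (γ_{y'})_{y'∈Y} the disintegration of γ with respect to its second marginal ρ, and define the measure λ' on Z×Y by ∫ φ dλ' := ∫_{Z×Y} ∫_Z ∫_Y φ(z,y) dγ̄_{z'}(z) dγ_{y'}(y) dλ(z',y') for bounded measurable φ. Then: (a) λ' ∈ Π(σ', ρ'); (b) KL(λ' | σ'⊗ρ') ≤ KL(λ | σ⊗ρ); and (c) W_{Z×Y}(λ', λ) ≤ ∫_{Z×Z} ‖z−z'‖ dγ̄(z,z') + ∫_{Y×Y} ‖y−y'‖ dγ(y,y'), where Z×Y carries the Euclidean distance. -/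

import Mathlib

open MeasureTheory Set Filter
open scoped ENNReal Classical

noncomputable section

abbrev E (d : ℕ) : Type := EuclideanSpace ℝ (Fin d)

/-- Optimal-transport cost with cost function `c`. -/
noncomputable def OTC {A B : Type*} [MeasurableSpace A] [MeasurableSpace B]
    (c : A → B → ℝ≥0∞) (α : Measure A) (β : Measure B) : ℝ≥0∞ :=
  ⨅ (γ : Measure (A × B)) (_ : γ.map Prod.fst = α) (_ : γ.map Prod.snd = β),
    ∫⁻ p, c p.1 p.2 ∂γ

/-- Euclidean distance on `ℝ^{d₁} × ℝ^{d₂} = ℝ^{d₁+d₂}`. -/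
noncomputable def edistE2 {d₁ d₂ : ℕ} (p q : E d₁ × E d₂) : ℝ≥0∞ :=
  ENNReal.ofReal (Real.sqrt (dist p.1 q.1 ^ 2 + dist p.2 q.2 ^ 2))

/-- Kullback–Leibler divergence via `φ(s) = s log s − s + 1`. -/
def KLphi (s : ℝ) : ℝ := s * Real.log s - s + 1

noncomputable def KL {A : Type*} [MeasurableSpace A] (α β : Measure A) : ℝ≥0∞ :=
  if α ≪ β then ∫⁻ x, ENNReal.ofReal (KLphi ((α.rnDeriv β x).toReal)) ∂β else ⊤

/-- Product of two measures. -/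
noncomputable def prodM {A B : Type*} [MeasurableSpace A] [MeasurableSpace B]
    (α : Measure A) (β : Measure B) : Measure (A × B) :=
  α.bind fun a => β.map (Prod.mk a)

section Aux

open ProbabilityTheory

lemma klphi_continuous : Continuous KLphi := by
  have := Real.continuous_mul_log
  unfold KLphi
  fun_prop

lemma klphi_convexOn : ConvexOn ℝ (Set.Ici (0:ℝ)) KLphi := by
  have h1 := Real.convexOn_mul_log
  have h2 : ConvexOn ℝ (Set.Ici (0:ℝ)) (fun s : ℝ => -s + 1) := by
    refine ⟨convex_Ici 0, ?_⟩
    intro x _ y _ a b _ _ hab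
    simp only [smul_eq_mul]
    nlinarith
  have := h1.add h2
  convert this using 1
  · rfl
  ext s
  simp only [KLphi, Pi.add_apply]; ring

lemma klphi_nonneg {s : ℝ} (hs : 0 ≤ s) : 0 ≤ KLphi s := by
  rcases eq_or_lt_of_le hs with h | h
  · simp [KLphi, ← h]
  · have := Real.log_le_sub_one_of_pos (inv_pos.2 h)
    rw [Real.log_inv] at this
    have h2 : s * (-Real.log s) ≤ s * (s⁻¹ - 1) :=
      mul_le_mul_of_nonneg_left this hs
    have h3 : s * s⁻¹ = 1 := mul_inv_cancel₀ h.ne'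
    unfold KLphi
    nlinarith

lemma klphi_measurable : Measurable KLphi := klphi_continuous.measurable

/-- Data processing inequality for KL under a Markov kernel. -/
lemma KL_bind_le {X : Type*} [MeasurableSpace X] [StandardBorelSpace X] [Nonempty X]
    (μ ν : Measure X) [IsProbabilityMeasure μ] [IsProbabilityMeasure ν]
    (K : Kernel X X) [IsMarkovKernel K] :
    KL (μ.bind K) (ν.bind K) ≤ KL μ ν := by
  by_cases hac : μ ≪ ν
  swap
  · simp only [KL]; rw [if_neg hac]; exact le_top
  set f : X → ℝ≥0∞ := μ.rnDeriv ν with hfdef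
  have hfm : Measurable f := μ.measurable_rnDeriv ν
  have hμ : ν.withDensity f = μ := Measure.withDensity_rnDeriv_eq μ ν hac
  set J : Measure (X × X) := ν.compProd K with hJdef
  haveI : IsProbabilityMeasure J := inferInstance
  set J' : Measure (X × X) := J.map Prod.swap with hJ'def
  haveI : IsProbabilityMeasure J' := Measure.isProbabilityMeasure_map measurable_swap.aemeasurable
  set κ : Kernel X X := J'.condKernel with hκdef
  have hdis : J'.fst ⊗ₘ κ = J' := J'.disintegrate κ
  haveI hν' : IsProbabilityMeasure (ν.bind ⇑K) := by
    constructor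
    rw [Measure.bind_apply MeasurableSet.univ K.measurable.aemeasurable]
    simp
  have hfst : J'.fst = ν.bind ⇑K := by
    rw [hJ'def, Measure.fst_map_swap]
    ext s hs
    rw [Measure.snd_apply hs, Measure.compProd_apply (measurable_snd hs),
        Measure.bind_apply hs K.measurable.aemeasurable]
    rfl
  -- key identity
  have key : ∀ (F : X → ℝ≥0∞), Measurable F →
      ∫⁻ w, ∫⁻ x, F x ∂(κ w) ∂(ν.bind ⇑K) = ∫⁻ x, F x ∂ν := by
    intro F hF
    have hF2 : Measurable fun p : X × X => F p.2 := hF.comp measurable_snd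
    have hF1 : Measurable fun p : X × X => F p.1 := hF.comp measurable_fst
    calc ∫⁻ w, ∫⁻ x, F x ∂(κ w) ∂(ν.bind ⇑K)
        = ∫⁻ w, ∫⁻ x, F x ∂(κ w) ∂(J'.fst) := by rw [hfst]
      _ = ∫⁻ p, F p.2 ∂(J'.fst ⊗ₘ κ) := (Measure.lintegral_compProd hF2).symm
      _ = ∫⁻ p, F p.2 ∂J' := by rw [hdis]
      _ = ∫⁻ p, F p.1 ∂J := by
            rw [hJ'def, lintegral_map hF2 measurable_swap]; rfl
      _ = ∫⁻ a, ∫⁻ b, F a ∂(K a) ∂ν := Measure.lintegral_compProd hF1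
      _ = ∫⁻ a, F a ∂ν := by simp
  -- the density of μ.bind K
  set g : X → ℝ≥0∞ := fun w => ∫⁻ x, f x ∂(κ w) with hgdef
  have hgm : Measurable g := by
    apply Measurable.lintegral_kernel_prod_right (κ := κ)
    exact hfm.comp measurable_snd
  have hbind : μ.bind ⇑K = (ν.bind ⇑K).withDensity g := by
    ext s hs
    have hKs : Measurable fun x => K x s := K.measurable_coe hs
    have hind : Measurable fun w : X => s.indicator (fun _ => (1:ℝ≥0∞)) w :=
      measurable_const.indicator hs
    have hmix : Measurable fun p : X × X => f p.1 * s.indicator (fun _ => (1:ℝ≥0∞)) p.2 :=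
      (hfm.comp measurable_fst).mul (hind.comp measurable_snd)
    have hmix' : Measurable fun p : X × X => f p.2 * s.indicator (fun _ => (1:ℝ≥0∞)) p.1 :=
      (hfm.comp measurable_snd).mul (hind.comp measurable_fst)
    calc (μ.bind ⇑K) s = ∫⁻ x, K x s ∂μ := Measure.bind_apply hs K.measurable.aemeasurable
      _ = ∫⁻ x, K x s ∂(ν.withDensity f) := by rw [hμ]
      _ = ∫⁻ x, f x * K x s ∂ν := by
            rw [lintegral_withDensity_eq_lintegral_mul ν hfm hKs]; rfl
      _ = ∫⁻ x, ∫⁻ w, f x * s.indicator (fun _ => (1:ℝ≥0∞)) w ∂(K x) ∂ν := by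
            congr 1; ext x
            rw [lintegral_const_mul _ hind, lintegral_indicator hs]
            simp
      _ = ∫⁻ p, f p.1 * s.indicator (fun _ => (1:ℝ≥0∞)) p.2 ∂J :=
            (Measure.lintegral_compProd hmix).symm
      _ = ∫⁻ p, f p.2 * s.indicator (fun _ => (1:ℝ≥0∞)) p.1 ∂J' := by
            rw [hJ'def, lintegral_map hmix' measurable_swap]; rfl
      _ = ∫⁻ w, ∫⁻ x, f x * s.indicator (fun _ => (1:ℝ≥0∞)) w ∂(κ w) ∂(J'.fst) := by
            conv_lhs => rw [← hdis]
            rw [Measure.lintegral_compProd hmix']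
      _ = ∫⁻ w, s.indicator (fun _ => (1:ℝ≥0∞)) w * g w ∂(ν.bind ⇑K) := by
            rw [hfst]; congr 1; ext w
            rw [lintegral_mul_const _ hfm, mul_comm]
      _ = ∫⁻ w in s, g w ∂(ν.bind ⇑K) := by
            rw [← lintegral_indicator hs]
            congr 1; ext w
            by_cases hw : w ∈ s <;> simp [indicator, hw]
      _ = ((ν.bind ⇑K).withDensity g) s := (withDensity_apply g hs).symm
  have hac' : μ.bind ⇑K ≪ ν.bind ⇑K := by
    rw [hbind]; exact withDensity_absolutelyContinuous _ _
  have hrn : (μ.bind ⇑K).rnDeriv (ν.bind ⇑K) =ᵐ[ν.bind ⇑K] g := by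
    rw [hbind]; exact Measure.rnDeriv_withDensity _ hgm
  -- a.e. facts
  have hgfin : ∀ᵐ w ∂(ν.bind ⇑K), g w < ∞ := by
    refine ae_lt_top hgm ?_
    rw [hgdef]
    rw [key f hfm, Measure.lintegral_rnDeriv hac]
    simp
  have hffin : ∀ᵐ w ∂(ν.bind ⇑K), (κ w) {x | f x = ∞} = 0 := by
    have hset : MeasurableSet {x | f x = ∞} := hfm (measurableSet_singleton ∞)
    have h0 : ∫⁻ w, ∫⁻ x, {x | f x = ∞}.indicator (fun _ => (1:ℝ≥0∞)) x ∂(κ w) ∂(ν.bind ⇑K) = 0 := by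
      rw [key _ (measurable_const.indicator hset)]
      rw [lintegral_indicator hset]
      have h := ae_iff.mp (Measure.rnDeriv_lt_top μ ν)
      simp only [not_lt, top_le_iff] at h
      simp [h, hfdef]
    have hm0 : Measurable fun w => ∫⁻ x, {x | f x = ∞}.indicator (fun _ => (1:ℝ≥0∞)) x ∂(κ w) := by
      apply Measurable.lintegral_kernel_prod_right (κ := κ)
      exact (measurable_const.indicator hset).comp measurable_snd
    have h0' := (lintegral_eq_zero_iff hm0).mp h0
    filter_upwards [h0'] with w hw
    rwa [lintegral_indicator hset, setLIntegral_one] at hw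
  -- pointwise Jensen
  have hjensen : ∀ᵐ w ∂(ν.bind ⇑K),
      ENNReal.ofReal (KLphi (g w).toReal) ≤ ∫⁻ x, ENNReal.ofReal (KLphi (f x).toReal) ∂(κ w) := by
    filter_upwards [hgfin, hffin] with w hg1 hf1
    set m := κ w with hmdef
    haveI : IsProbabilityMeasure m := inferInstance
    have hfae : ∀ᵐ x ∂m, f x < ∞ := by
      rw [ae_iff]
      convert hf1 using 2
      ext x; simp [not_lt, top_le_iff]
    have hFr_int : Integrable (fun x => (f x).toReal) m :=
      integrable_toReal_of_lintegral_ne_top hfm.aemeasurable hg1.ne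
    have hmean : ∫ x, (f x).toReal ∂m = (g w).toReal := by
      rw [integral_toReal hfm.aemeasurable hfae]
    by_cases hfin : ∫⁻ x, ENNReal.ofReal (KLphi (f x).toReal) ∂m = ∞
    · rw [hfin]; exact le_top
    · have hklm : Measurable fun x => KLphi (f x).toReal :=
        klphi_measurable.comp hfm.ennreal_toReal
      have hnn : ∀ x, 0 ≤ KLphi (f x).toReal := fun x => klphi_nonneg ENNReal.toReal_nonneg
      have hint2 : Integrable (fun x => KLphi (f x).toReal) m := by
        have := integrable_toReal_of_lintegral_ne_top
          (ENNReal.measurable_ofReal.comp hklm).aemeasurable hfin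
        refine this.congr ?_
        filter_upwards with x
        simp [ENNReal.toReal_ofReal (hnn x)]
      have hJ := klphi_convexOn.map_integral_le klphi_continuous.continuousOn isClosed_Ici
        (Filter.Eventually.of_forall fun x => ENNReal.toReal_nonneg) hFr_int hint2
      rw [hmean] at hJ
      calc ENNReal.ofReal (KLphi (g w).toReal)
          ≤ ENNReal.ofReal (∫ x, KLphi (f x).toReal ∂m) := ENNReal.ofReal_le_ofReal hJ
        _ = ∫⁻ x, ENNReal.ofReal (KLphi (f x).toReal) ∂m :=
            ofReal_integral_eq_lintegral_ofReal hint2 (Filter.Eventually.of_forall hnn)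
  -- conclude
  have hmeas_kl : Measurable fun x => ENNReal.ofReal (KLphi (f x).toReal) :=
    ENNReal.measurable_ofReal.comp (klphi_measurable.comp hfm.ennreal_toReal)
  calc KL (μ.bind ⇑K) (ν.bind ⇑K)
      = ∫⁻ w, ENNReal.ofReal (KLphi (((μ.bind ⇑K).rnDeriv (ν.bind ⇑K)) w).toReal) ∂(ν.bind ⇑K) := by
        rw [KL, if_pos hac']
    _ = ∫⁻ w, ENNReal.ofReal (KLphi (g w).toReal) ∂(ν.bind ⇑K) := by
        apply lintegral_congr_ae
        filter_upwards [hrn] with w hw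
        rw [hw]
    _ ≤ ∫⁻ w, ∫⁻ x, ENNReal.ofReal (KLphi (f x).toReal) ∂(κ w) ∂(ν.bind ⇑K) :=
        lintegral_mono_ae hjensen
    _ = ∫⁻ x, ENNReal.ofReal (KLphi (f x).toReal) ∂ν := key _ hmeas_kl
    _ = KL μ ν := by rw [KL, if_pos hac]

lemma prodM_eq {A B : Type*} [MeasurableSpace A] [MeasurableSpace B]
    (α : Measure A) (β : Measure B) : prodM α β = α.prod β :=
  (Measure.prod_def α β).symm

lemma map_snd_compProd {A B : Type*} [MeasurableSpace A] [MeasurableSpace B]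
    (μ : Measure A) [SFinite μ] (κ : Kernel A B) [IsSFiniteKernel κ] :
    (μ.compProd κ).map Prod.snd = μ.bind ⇑κ := by
  ext s hs
  rw [Measure.map_apply measurable_snd hs, Measure.compProd_apply (measurable_snd hs),
      Measure.bind_apply hs κ.measurable.aemeasurable]
  rfl

lemma edistE2_le {d₁ d₂ : ℕ} (p q : E d₁ × E d₂) :
    edistE2 p q ≤ edist p.1 q.1 + edist p.2 q.2 := by
  rw [edistE2, edist_dist, edist_dist, ← ENNReal.ofReal_add dist_nonneg dist_nonneg]
  apply ENNReal.ofReal_le_ofReal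
  have h1 : dist p.1 q.1 ^ 2 + dist p.2 q.2 ^ 2 ≤ (dist p.1 q.1 + dist p.2 q.2) ^ 2 := by
    nlinarith [dist_nonneg (x := p.1) (y := q.1), dist_nonneg (x := p.2) (y := q.2)]
  calc Real.sqrt (dist p.1 q.1 ^ 2 + dist p.2 q.2 ^ 2)
      ≤ Real.sqrt ((dist p.1 q.1 + dist p.2 q.2) ^ 2) := Real.sqrt_le_sqrt h1
    _ = dist p.1 q.1 + dist p.2 q.2 := Real.sqrt_sq (by positivity)

end Aux

/-- the gluing construction of the Γ-limsup recovery sequence.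
Given `γ̄ ∈ Π(σ', σ)`, `γ ∈ Π(ρ', ρ)`, `λ ∈ Π(σ, ρ)` and Markov kernels `κZ, κY`
disintegrating `γ̄`, `γ` over their second marginals, the glued measure
`λ' = λ.bind (fun (z',y') => κZ z' ⊗ κY y')` satisfies: (a) `λ' ∈ Π(σ', ρ')`;
(b) `KL(λ'|σ'⊗ρ') ≤ KL(λ|σ⊗ρ)`; (c) `W_{Z×Y}(λ', λ) ≤ ∫‖z−z'‖dγ̄ + ∫‖y−y'‖dγ`
(Euclidean distance on `Z×Y`). -/
theorem stmt8 (d₁ d₂ : ℕ) (Z : Set (E d₁)) (Y : Set (E d₂))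
    (hZ : IsCompact Z) (hY : IsCompact Y)
    (σ' σ : Measure (E d₁)) [IsProbabilityMeasure σ'] [IsProbabilityMeasure σ]
    (hσ'Z : σ' Zᶜ = 0) (hσZ : σ Zᶜ = 0)
    (ρ' ρ : Measure (E d₂)) [IsProbabilityMeasure ρ'] [IsProbabilityMeasure ρ]
    (hρ'Y : ρ' Yᶜ = 0) (hρY : ρ Yᶜ = 0)
    (γbar : Measure (E d₁ × E d₁)) [IsProbabilityMeasure γbar]
    (hγbar1 : γbar.map Prod.fst = σ') (hγbar2 : γbar.map Prod.snd = σ)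
    (γ : Measure (E d₂ × E d₂)) [IsProbabilityMeasure γ]
    (hγ1 : γ.map Prod.fst = ρ') (hγ2 : γ.map Prod.snd = ρ)
    (l : Measure (E d₁ × E d₂)) [IsProbabilityMeasure l]
    (hl1 : l.map Prod.fst = σ) (hl2 : l.map Prod.snd = ρ)
    (κZ : ProbabilityTheory.Kernel (E d₁) (E d₁)) [ProbabilityTheory.IsMarkovKernel κZ]
    (hκZ : (σ.compProd κZ).map Prod.swap = γbar)
    (κY : ProbabilityTheory.Kernel (E d₂) (E d₂)) [ProbabilityTheory.IsMarkovKernel κY]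
    (hκY : (ρ.compProd κY).map Prod.swap = γ) :
    (l.bind fun p => prodM (κZ p.1) (κY p.2)).map Prod.fst = σ' ∧
    (l.bind fun p => prodM (κZ p.1) (κY p.2)).map Prod.snd = ρ' ∧
    KL (l.bind fun p => prodM (κZ p.1) (κY p.2)) (prodM σ' ρ') ≤ KL l (prodM σ ρ) ∧
    OTC edistE2 (l.bind fun p => prodM (κZ p.1) (κY p.2)) l ≤
      ∫⁻ p, edist p.1 p.2 ∂γbar + ∫⁻ p, edist p.1 p.2 ∂γ := by
  classical
  set K : ProbabilityTheory.Kernel (E d₁ × E d₂) (E d₁ × E d₂) :=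
    (κZ.comap Prod.fst measurable_fst).prod (κY.comap Prod.snd measurable_snd) with hKdef
  haveI : ProbabilityTheory.IsMarkovKernel K := by rw [hKdef]; infer_instance
  have hK : ∀ p : E d₁ × E d₂, K p = (κZ p.1).prod (κY p.2) := by
    intro p
    rw [hKdef, ProbabilityTheory.Kernel.prod_apply, ProbabilityTheory.Kernel.comap_apply,
        ProbabilityTheory.Kernel.comap_apply]
  have hfun : (fun p : E d₁ × E d₂ => prodM (κZ p.1) (κY p.2)) = ⇑K := by
    funext p
    rw [prodM_eq, hK]
  rw [hfun]
  -- marginal kernels applied to σ, ρ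
  have hσ'b : σ.bind ⇑κZ = σ' := by
    rw [← map_snd_compProd σ κZ, ← hγbar1, ← hκZ,
        Measure.map_map measurable_fst measurable_swap]
    rfl
  have hρ'b : ρ.bind ⇑κY = ρ' := by
    rw [← map_snd_compProd ρ κY, ← hγ1, ← hκY,
        Measure.map_map measurable_fst measurable_swap]
    rfl
  -- (a) first marginal
  have ha1 : (l.bind ⇑K).map Prod.fst = σ' := by
    rw [← hσ'b]
    ext s hs
    have hpre : Prod.fst ⁻¹' s = s ×ˢ (univ : Set (E d₂)) := by ext q; simp
    rw [Measure.map_apply measurable_fst hs,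
        Measure.bind_apply (measurable_fst hs) K.measurable.aemeasurable,
        Measure.bind_apply hs κZ.measurable.aemeasurable]
    have hpt : ∀ p : E d₁ × E d₂, K p (Prod.fst ⁻¹' s) = κZ p.1 s := by
      intro p
      rw [hK, hpre, Measure.prod_prod]
      simp
    simp_rw [hpt]
    rw [← hl1, lintegral_map (κZ.measurable_coe hs) measurable_fst]
  -- (a) second marginal
  have ha2 : (l.bind ⇑K).map Prod.snd = ρ' := by
    rw [← hρ'b]
    ext s hs
    have hpre : Prod.snd ⁻¹' s = (univ : Set (E d₁)) ×ˢ s := by ext q; simp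
    rw [Measure.map_apply measurable_snd hs,
        Measure.bind_apply (measurable_snd hs) K.measurable.aemeasurable,
        Measure.bind_apply hs κY.measurable.aemeasurable]
    have hpt : ∀ p : E d₁ × E d₂, K p (Prod.snd ⁻¹' s) = κY p.2 s := by
      intro p
      rw [hK, hpre, Measure.prod_prod]
      simp
    simp_rw [hpt]
    rw [← hl2, lintegral_map (κY.measurable_coe hs) measurable_snd]
  refine ⟨ha1, ha2, ?_, ?_⟩
  -- (b) KL bound
  · haveI hprod : IsProbabilityMeasure (prodM σ ρ) := by
      rw [prodM_eq]; infer_instance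
    have hν_eq : (prodM σ ρ).bind ⇑K = prodM σ' ρ' := by
      rw [prodM_eq, prodM_eq]
      refine (Measure.prod_eq (μ := σ') (ν := ρ') fun s t hs ht => ?_).symm
      rw [Measure.bind_apply ((hs.prod ht)) K.measurable.aemeasurable]
      have hpt : ∀ p : E d₁ × E d₂, K p (s ×ˢ t) = κZ p.1 s * κY p.2 t := by
        intro p; rw [hK, Measure.prod_prod]
      simp_rw [hpt]
      rw [lintegral_prod_mul (κZ.measurable_coe hs).aemeasurable
        (κY.measurable_coe ht).aemeasurable,
        ← Measure.bind_apply hs κZ.measurable.aemeasurable, ← Measure.bind_apply ht κY.measurable.aemeasurable,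
        hσ'b, hρ'b]
    rw [← hν_eq]
    exact KL_bind_le l (prodM σ ρ) K
  -- (c) Wasserstein bound
  · set Kc : ProbabilityTheory.Kernel (E d₁ × E d₂) ((E d₁ × E d₂) × (E d₁ × E d₂)) :=
      K.prod ProbabilityTheory.Kernel.id with hKcdef
    haveI : ProbabilityTheory.IsMarkovKernel Kc := by rw [hKcdef]; infer_instance
    have hKc : ∀ p, Kc p = (K p).prod (Measure.dirac p) := by
      intro p
      rw [hKcdef, ProbabilityTheory.Kernel.prod_apply, ProbabilityTheory.Kernel.id_apply]
    haveI hOM : OpensMeasurableSpace ((E d₁ × E d₂) × (E d₁ × E d₂)) :=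
      Prod.opensMeasurableSpace
    have hced : Continuous fun q : (E d₁ × E d₂) × (E d₁ × E d₂) => edistE2 q.1 q.2 := by
      unfold edistE2
      exact ENNReal.continuous_ofReal.comp (by fun_prop)
    have hmed : Measurable fun q : (E d₁ × E d₂) × (E d₁ × E d₂) => edistE2 q.1 q.2 :=
      hced.measurable
    -- marginals of the coupling
    have hπ1 : (l.bind ⇑Kc).map Prod.fst = l.bind ⇑K := by
      ext s hs
      have hpre : Prod.fst ⁻¹' s = s ×ˢ (univ : Set (E d₁ × E d₂)) := by ext q; simp
      rw [Measure.map_apply measurable_fst hs,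
          Measure.bind_apply (measurable_fst hs) Kc.measurable.aemeasurable,
          Measure.bind_apply hs K.measurable.aemeasurable]
      congr 1; ext p
      rw [hKc, hpre, Measure.prod_prod]
      simp
    have hπ2 : (l.bind ⇑Kc).map Prod.snd = l := by
      ext s hs
      have hpre : Prod.snd ⁻¹' s = (univ : Set (E d₁ × E d₂)) ×ˢ s := by ext q; simp
      rw [Measure.map_apply measurable_snd hs,
          Measure.bind_apply (measurable_snd hs) Kc.measurable.aemeasurable]
      have hpt : ∀ p : E d₁ × E d₂, Kc p (Prod.snd ⁻¹' s) = s.indicator (fun _ => (1:ℝ≥0∞)) p := by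
        intro p
        rw [hKc, hpre, Measure.prod_prod, Measure.dirac_apply' _ hs]
        simp only [measure_univ, one_mul]
        rfl
      simp_rw [hpt]
      rw [lintegral_indicator hs, setLIntegral_one]
    -- the two transport integrands
    set A : E d₁ → ℝ≥0∞ := fun z' => ∫⁻ z, edist z z' ∂(κZ z') with hAdef
    set B : E d₂ → ℝ≥0∞ := fun y' => ∫⁻ y, edist y y' ∂(κY y') with hBdef
    have hedm1 : Measurable fun q : E d₁ × E d₁ => edist q.2 q.1 :=
      measurable_edist.comp (measurable_snd.prodMk measurable_fst)
    have hedm2 : Measurable fun q : E d₂ × E d₂ => edist q.2 q.1 :=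
      measurable_edist.comp (measurable_snd.prodMk measurable_fst)
    have hAm : Measurable A := by
      apply Measurable.lintegral_kernel_prod_right (κ := κZ)
      exact hedm1
    have hBm : Measurable B := by
      apply Measurable.lintegral_kernel_prod_right (κ := κY)
      exact hedm2
    have hAσ : ∫⁻ z', A z' ∂σ = ∫⁻ p, edist p.1 p.2 ∂γbar := by
      calc ∫⁻ z', A z' ∂σ
          = ∫⁻ q, edist q.2 q.1 ∂(σ.compProd κZ) := (Measure.lintegral_compProd hedm1).symm
        _ = ∫⁻ p, edist p.1 p.2 ∂((σ.compProd κZ).map Prod.swap) := by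
            rw [lintegral_map measurable_edist measurable_swap]; rfl
        _ = ∫⁻ p, edist p.1 p.2 ∂γbar := by rw [hκZ]
    have hBρ : ∫⁻ y', B y' ∂ρ = ∫⁻ p, edist p.1 p.2 ∂γ := by
      calc ∫⁻ y', B y' ∂ρ
          = ∫⁻ q, edist q.2 q.1 ∂(ρ.compProd κY) := (Measure.lintegral_compProd hedm2).symm
        _ = ∫⁻ p, edist p.1 p.2 ∂((ρ.compProd κY).map Prod.swap) := by
            rw [lintegral_map measurable_edist measurable_swap]; rfl
        _ = ∫⁻ p, edist p.1 p.2 ∂γ := by rw [hκY]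
    calc OTC edistE2 (l.bind ⇑K) l
        ≤ ∫⁻ q, edistE2 q.1 q.2 ∂(l.bind ⇑Kc) := by
          refine iInf_le_of_le (l.bind ⇑Kc) ?_
          refine iInf_le_of_le hπ1 ?_
          exact iInf_le_of_le hπ2 le_rfl
      _ = ∫⁻ p, ∫⁻ q, edistE2 q.1 q.2 ∂(Kc p) ∂l := Measure.lintegral_bind Kc.measurable.aemeasurable hmed.aemeasurable
      _ ≤ ∫⁻ p, (A p.1 + B p.2) ∂l := by
          apply lintegral_mono
          intro p
          haveI : IsProbabilityMeasure (κZ p.1) := inferInstance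
          haveI : IsProbabilityMeasure (κY p.2) := inferInstance
          have step1 : ∫⁻ q, edistE2 q.1 q.2 ∂(Kc p) = ∫⁻ w, edistE2 w p ∂(K p) := by
            rw [hKc, lintegral_prod _ hmed.aemeasurable]
            congr 1; ext w
            exact lintegral_dirac' p (hced.measurable.comp (measurable_prodMk_left))
          have step2 : ∫⁻ w, edistE2 w p ∂(K p)
              ≤ ∫⁻ w, (edist w.1 p.1 + edist w.2 p.2) ∂(K p) :=
            lintegral_mono fun w => edistE2_le w p
          have step3 : ∫⁻ w, (edist w.1 p.1 + edist w.2 p.2) ∂(K p) = A p.1 + B p.2 := by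
            rw [hK]
            have hm1 : Measurable fun w : E d₁ × E d₂ => edist w.1 p.1 :=
              (measurable_edist.comp (measurable_fst.prodMk measurable_const))
            have hm2 : Measurable fun w : E d₁ × E d₂ => edist w.2 p.2 :=
              (measurable_edist.comp (measurable_snd.prodMk measurable_const))
            rw [lintegral_add_left hm1]
            congr 1
            · rw [lintegral_prod _ hm1.aemeasurable]
              simp [lintegral_const, hAdef]
            · rw [lintegral_prod _ hm2.aemeasurable]
              simp [lintegral_const, hBdef]
          calc ∫⁻ q, edistE2 q.1 q.2 ∂(Kc p) = ∫⁻ w, edistE2 w p ∂(K p) := step1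
            _ ≤ ∫⁻ w, (edist w.1 p.1 + edist w.2 p.2) ∂(K p) := step2
            _ = A p.1 + B p.2 := step3
      _ = ∫⁻ p, A p.1 ∂l + ∫⁻ p, B p.2 ∂l := lintegral_add_left (hAm.comp measurable_fst) _
      _ = ∫⁻ z', A z' ∂σ + ∫⁻ y', B y' ∂ρ := by
          rw [← hl1, ← hl2, lintegral_map hAm measurable_fst, lintegral_map hBm measurable_snd]
      _ = ∫⁻ p, edist p.1 p.2 ∂γbar + ∫⁻ p, edist p.1 p.2 ∂γ := by rw [hAσ, hBρ]
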